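/- Let 𝒮 and 𝒜 be finite sets and γ ∈ (0,1). Let (r₁, P₁) and (r₂, P₂) be two Markov decision processes on 𝒮 × 𝒜 with rewards bounded by |r_i(s,a)| ≤ R, reward gap |r₁(s,a) − r₂(s,a)| ≤ ε_r for all (s,a), and transition gap Σ_{s'} |P₁(s'|s,a) − P₂(s'|s,a)| ≤ ε_P for all (s,a). Fix a policy π and let Q₁^π, Q₂^π be its state–action value functions in the two models, i.e., the (unique bounded) solutions of Q_i^π(s,a) = r_i(s,a) + γ Σ_{s'} P_i(s'|s,a) Σ_b π(b|s') Q_i^π(s',b). Then for every (s,a): |Q₁^π(s,a) − Q₂^π(s,a)| ≤ ε_r/(1−γ) + R·γ·ε_P/(1−γ)². -/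

import Mathlib

open BigOperators

lemma wsum_abs_le' {ι : Type*} [Fintype ι] (w f : ι → ℝ) (C : ℝ)
    (hw0 : ∀ i, 0 ≤ w i) (hw1 : ∑ i, w i = 1) (hf : ∀ i, |f i| ≤ C) :
    |∑ i, w i * f i| ≤ C := by
  calc |∑ i, w i * f i| ≤ ∑ i, |w i * f i| := Finset.abs_sum_le_sum_abs _ _
    _ = ∑ i, w i * |f i| := by
        refine Finset.sum_congr rfl fun i _ => ?_
        rw [abs_mul, abs_of_nonneg (hw0 i)]
    _ ≤ ∑ i, w i * C := Finset.sum_le_sum fun i _ =>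
        mul_le_mul_of_nonneg_left (hf i) (hw0 i)
    _ = C := by rw [← Finset.sum_mul, hw1, one_mul]

/-- simulation lemma for the Q-functions of a fixed policy in
two nearby MDPs. -/
theorem policy_Q_perturbation
    {S A : Type*} [Fintype S] [Fintype A] [Nonempty S] [Nonempty A]
    (γ : ℝ) (hγ0 : 0 < γ) (hγ1 : γ < 1)
    (r₁ r₂ : S → A → ℝ) (P₁ P₂ : S → A → S → ℝ)
    (R εr εP : ℝ)
    (hP₁0 : ∀ s a s', 0 ≤ P₁ s a s') (hP₁1 : ∀ s a, ∑ s', P₁ s a s' = 1)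
    (hP₂0 : ∀ s a s', 0 ≤ P₂ s a s') (hP₂1 : ∀ s a, ∑ s', P₂ s a s' = 1)
    (hR₁ : ∀ s a, |r₁ s a| ≤ R) (hR₂ : ∀ s a, |r₂ s a| ≤ R)
    (hr : ∀ s a, |r₁ s a - r₂ s a| ≤ εr)
    (hP : ∀ s a, ∑ s', |P₁ s a s' - P₂ s a s'| ≤ εP)
    (π : S → A → ℝ)
    (hπ0 : ∀ s a, 0 ≤ π s a) (hπ1 : ∀ s, ∑ a, π s a = 1)
    (Q₁ Q₂ : S → A → ℝ)
    (hQ₁ : ∀ s a, Q₁ s a = r₁ s a + γ * ∑ s', P₁ s a s' * ∑ b, π s' b * Q₁ s' b)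
    (hQ₂ : ∀ s a, Q₂ s a = r₂ s a + γ * ∑ s', P₂ s a s' * ∑ b, π s' b * Q₂ s' b) :
    ∀ s a, |Q₁ s a - Q₂ s a| ≤ εr / (1 - γ) + R * γ * εP / (1 - γ)^2 := by
  have hγ' : (0:ℝ) < 1 - γ := by linarith
  have s₀ : S := Classical.arbitrary S
  have a₀ : A := Classical.arbitrary A
  have hεP0 : 0 ≤ εP :=
    le_trans (Finset.sum_nonneg fun i _ => abs_nonneg _) (hP s₀ a₀)
  -- maximizer of |Q₂|
  obtain ⟨p₀, -, hp₀⟩ := Finset.exists_max_image Finset.univ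
    (fun p : S × A => |Q₂ p.1 p.2|) ⟨(s₀, a₀), Finset.mem_univ _⟩
  set B : ℝ := |Q₂ p₀.1 p₀.2| with hBdef
  have hB0 : 0 ≤ B := abs_nonneg _
  have hBQ : ∀ s a, |Q₂ s a| ≤ B := fun s a => hp₀ (s, a) (Finset.mem_univ _)
  -- V₂ bound
  have hV₂ : ∀ s, |∑ b, π s b * Q₂ s b| ≤ B := fun s =>
    wsum_abs_le' _ _ _ (hπ0 s) (hπ1 s) (fun b => hBQ s b)
  have hBrec : B ≤ R + γ * B := by
    conv_lhs => rw [hBdef, hQ₂]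
    calc |r₂ p₀.1 p₀.2 + γ * ∑ s', P₂ p₀.1 p₀.2 s' * ∑ b, π s' b * Q₂ s' b|
        ≤ |r₂ p₀.1 p₀.2| + |γ * ∑ s', P₂ p₀.1 p₀.2 s' * ∑ b, π s' b * Q₂ s' b| :=
          abs_add_le _ _
      _ ≤ R + γ * B := by
          refine add_le_add (hR₂ _ _) ?_
          rw [abs_mul, abs_of_pos hγ0]
          exact mul_le_mul_of_nonneg_left
            (wsum_abs_le' _ _ _ (hP₂0 p₀.1 p₀.2) (hP₂1 p₀.1 p₀.2) hV₂) hγ0.le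
  have hBR : B * (1 - γ) ≤ R := by nlinarith
  -- maximizer of |Q₁ - Q₂|
  obtain ⟨q, -, hq⟩ := Finset.exists_max_image Finset.univ
    (fun p : S × A => |Q₁ p.1 p.2 - Q₂ p.1 p.2|) ⟨(s₀, a₀), Finset.mem_univ _⟩
  set M : ℝ := |Q₁ q.1 q.2 - Q₂ q.1 q.2| with hMdef
  have hMQ : ∀ s a, |Q₁ s a - Q₂ s a| ≤ M := fun s a => hq (s, a) (Finset.mem_univ _)
  have hVdiff : ∀ s, |∑ b, π s b * Q₁ s b - ∑ b, π s b * Q₂ s b| ≤ M := by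
    intro s
    rw [← Finset.sum_sub_distrib]
    have : ∀ b ∈ Finset.univ, π s b * Q₁ s b - π s b * Q₂ s b
        = π s b * (Q₁ s b - Q₂ s b) := fun b _ => by ring
    rw [Finset.sum_congr rfl this]
    exact wsum_abs_le' _ _ _ (hπ0 s) (hπ1 s) (fun b => hMQ s b)
  -- recursion for M at the maximizer
  have hMrec : M ≤ εr + γ * M + γ * (εP * B) := by
    conv_lhs => rw [hMdef, hQ₁ q.1 q.2, hQ₂ q.1 q.2]
    have hsplit : r₁ q.1 q.2 + γ * ∑ s', P₁ q.1 q.2 s' * ∑ b, π s' b * Q₁ s' b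
        - (r₂ q.1 q.2 + γ * ∑ s', P₂ q.1 q.2 s' * ∑ b, π s' b * Q₂ s' b)
        = (r₁ q.1 q.2 - r₂ q.1 q.2)
          + γ * (∑ s', P₁ q.1 q.2 s' *
              ((∑ b, π s' b * Q₁ s' b) - (∑ b, π s' b * Q₂ s' b)))
          + γ * (∑ s', (P₁ q.1 q.2 s' - P₂ q.1 q.2 s') * ∑ b, π s' b * Q₂ s' b) := by
      have hsum : (∑ s', P₁ q.1 q.2 s' * ∑ b, π s' b * Q₁ s' b)
          - (∑ s', P₂ q.1 q.2 s' * ∑ b, π s' b * Q₂ s' b)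
          = (∑ s', P₁ q.1 q.2 s' *
              ((∑ b, π s' b * Q₁ s' b) - (∑ b, π s' b * Q₂ s' b)))
            + (∑ s', (P₁ q.1 q.2 s' - P₂ q.1 q.2 s') * ∑ b, π s' b * Q₂ s' b) := by
        rw [← Finset.sum_add_distrib, ← Finset.sum_sub_distrib]
        exact Finset.sum_congr rfl fun s' _ => by ring
      linear_combination γ * hsum
    rw [hsplit]
    have h1 : |r₁ q.1 q.2 - r₂ q.1 q.2| ≤ εr := hr _ _
    have h2 : |∑ s', P₁ q.1 q.2 s' *
        ((∑ b, π s' b * Q₁ s' b) - (∑ b, π s' b * Q₂ s' b))| ≤ M :=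
      wsum_abs_le' _ _ _ (hP₁0 q.1 q.2) (hP₁1 q.1 q.2) (fun s' => hVdiff s')
    have h3 : |∑ s', (P₁ q.1 q.2 s' - P₂ q.1 q.2 s') * ∑ b, π s' b * Q₂ s' b|
        ≤ εP * B := by
      calc |∑ s', (P₁ q.1 q.2 s' - P₂ q.1 q.2 s') * ∑ b, π s' b * Q₂ s' b|
          ≤ ∑ s', |(P₁ q.1 q.2 s' - P₂ q.1 q.2 s') * ∑ b, π s' b * Q₂ s' b| :=
            Finset.abs_sum_le_sum_abs _ _
        _ ≤ ∑ s', |P₁ q.1 q.2 s' - P₂ q.1 q.2 s'| * B := by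
            refine Finset.sum_le_sum fun s' _ => ?_
            rw [abs_mul]
            exact mul_le_mul_of_nonneg_left (hV₂ s') (abs_nonneg _)
        _ = (∑ s', |P₁ q.1 q.2 s' - P₂ q.1 q.2 s'|) * B := by
            rw [Finset.sum_mul]
        _ ≤ εP * B := mul_le_mul_of_nonneg_right (hP q.1 q.2) hB0
    calc |(r₁ q.1 q.2 - r₂ q.1 q.2)
          + γ * (∑ s', P₁ q.1 q.2 s' *
              ((∑ b, π s' b * Q₁ s' b) - (∑ b, π s' b * Q₂ s' b)))
          + γ * (∑ s', (P₁ q.1 q.2 s' - P₂ q.1 q.2 s') * ∑ b, π s' b * Q₂ s' b)|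
        ≤ |(r₁ q.1 q.2 - r₂ q.1 q.2)
          + γ * (∑ s', P₁ q.1 q.2 s' *
              ((∑ b, π s' b * Q₁ s' b) - (∑ b, π s' b * Q₂ s' b)))|
          + |γ * (∑ s', (P₁ q.1 q.2 s' - P₂ q.1 q.2 s') * ∑ b, π s' b * Q₂ s' b)| :=
          abs_add_le _ _
      _ ≤ (|r₁ q.1 q.2 - r₂ q.1 q.2|
          + |γ * (∑ s', P₁ q.1 q.2 s' *
              ((∑ b, π s' b * Q₁ s' b) - (∑ b, π s' b * Q₂ s' b)))|)
          + |γ * (∑ s', (P₁ q.1 q.2 s' - P₂ q.1 q.2 s') * ∑ b, π s' b * Q₂ s' b)| :=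
          add_le_add_left (abs_add_le _ _) _
      _ ≤ εr + γ * M + γ * (εP * B) := by
          refine add_le_add (add_le_add h1 ?_) ?_ <;>
            rw [abs_mul, abs_of_pos hγ0]
          · exact mul_le_mul_of_nonneg_left h2 hγ0.le
          · exact mul_le_mul_of_nonneg_left h3 hγ0.le
  -- combine
  have key : M * (1 - γ)^2 ≤ εr * (1 - γ) + R * γ * εP := by
    have e1 : M * (1 - γ) ≤ εr + γ * (εP * B) := by nlinarith
    have e2 : M * (1 - γ) * (1 - γ) ≤ (εr + γ * (εP * B)) * (1 - γ) :=
      mul_le_mul_of_nonneg_right e1 hγ'.le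
    have e3 : γ * εP * (B * (1 - γ)) ≤ γ * εP * R :=
      mul_le_mul_of_nonneg_left hBR (mul_nonneg hγ0.le hεP0)
    nlinarith [e2, e3]
  intro s a
  have hrhs : εr / (1 - γ) + R * γ * εP / (1 - γ)^2
      = (εr * (1 - γ) + R * γ * εP) / (1 - γ)^2 := by
    field_simp
  rw [hrhs, le_div_iff₀ (by positivity)]
  calc |Q₁ s a - Q₂ s a| * (1 - γ)^2 ≤ M * (1 - γ)^2 :=
      mul_le_mul_of_nonneg_right (hMQ s a) (by positivity)
    _ ≤ εr * (1 - γ) + R * γ * εP := key
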